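/- arXiv:alg-geom/9711004 — 2 statements merged into one kernel-verified Lean document; each statement's English description precedes it below -/
import Mathlib

section
/- Let $K$ be a field, $I \subseteq K[x_1,\dots,x_n]$ an ideal vanishing at $0$, and $v \in K^n$ with $l_f(v) = 0$ and, whenever $l_f = 0$, also $q_f(v) = 0$, for all $f \in I$. Then there exists $\gamma \in K^n$, either zero or linearly independent of $v$, such that for every $f \in I$, the power series $f(tv + t^2\gamma) \in K[[t]]$ has vanishing coefficients in degrees $0$, $1$, and $2$. -/
open MvPolynomial

noncomputable section CurveAux

variable {K : Type*} [Field K] {n : ℕ}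

lemma curveAux_degree_one {d : Fin n →₀ ℕ} (h : d.degree = 1) :
    ∃ i, d = Finsupp.single i 1 := by
  have hd : d ≠ 0 := by rintro rfl; simp [map_zero] at h
  obtain ⟨i, hi⟩ : ∃ i, d i ≠ 0 := by
    by_contra hc
    push_neg at hc
    exact hd (Finsupp.ext fun i => hc i)
  have his : i ∈ d.support := Finsupp.mem_support_iff.mpr hi
  have hile : d i ≤ 1 := h ▸ Finset.single_le_sum (fun _ _ => Nat.zero_le _) his
  have hie : d i = 1 := le_antisymm hile (Nat.one_le_iff_ne_zero.mpr hi)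
  refine ⟨i, Finsupp.ext fun j => ?_⟩
  rcases eq_or_ne j i with rfl | hj
  · simpa using hie
  · rw [Finsupp.single_apply, if_neg fun hij => hj hij.symm]
    by_contra hj0
    have hjs : j ∈ d.support := Finsupp.mem_support_iff.mpr hj0
    have hsub : ({i, j} : Finset (Fin n)) ⊆ d.support := by
      intro x hx
      rcases Finset.mem_insert.mp hx with rfl | hx
      · exact his
      · rw [Finset.mem_singleton.mp hx]; exact hjs
    have h2 : d i + d j ≤ d.degree := by
      have := Finset.sum_le_sum_of_subset (f := d) hsub
      rwa [Finset.sum_pair fun h => hj h.symm] at this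
    omega

def curveSigma (v γ : Fin n → K) : Fin n → Polynomial K :=
  fun i => Polynomial.C (v i) * Polynomial.X + Polynomial.C (γ i) * Polynomial.X ^ 2

def curveP (v γ : Fin n → K) (d : Fin n →₀ ℕ) : Polynomial K :=
  d.prod fun i k => (Polynomial.C (v i) + Polynomial.C (γ i) * Polynomial.X) ^ k

lemma curveP_zero (v γ : Fin n → K) : curveP v γ 0 = 1 := by
  simp [curveP]

lemma curveP_single (v γ : Fin n → K) (i : Fin n) :
    curveP v γ (Finsupp.single i 1) =
      Polynomial.C (v i) + Polynomial.C (γ i) * Polynomial.X := by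
  rw [curveP, Finsupp.prod_single_index (by rw [pow_zero]), pow_one]

lemma curveP_coeff_zero (v γ : Fin n → K) (d : Fin n →₀ ℕ) :
    (curveP v γ d).coeff 0 = d.prod fun i k => v i ^ k := by
  rw [Polynomial.coeff_zero_eq_eval_zero, curveP, Finsupp.prod, Finsupp.prod,
    Polynomial.eval_prod]
  exact Finset.prod_congr rfl fun i _ => by simp

lemma curve_aeval_monomial (v γ : Fin n → K) (d : Fin n →₀ ℕ) (c : K) :
    aeval (curveSigma v γ) (monomial d c) =
      Polynomial.C c * (curveP v γ d * Polynomial.X ^ d.degree) := by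
  rw [aeval_monomial]
  have h1 : (d.prod fun i k => curveSigma v γ i ^ k) =
      curveP v γ d * Polynomial.X ^ d.degree := by
    have : (d.prod fun i k => curveSigma v γ i ^ k) =
        d.prod fun i k =>
          ((Polynomial.C (v i) + Polynomial.C (γ i) * Polynomial.X) ^ k *
            Polynomial.X ^ k) := by
      refine Finset.prod_congr rfl fun i _ => ?_
      show curveSigma v γ i ^ d i =
        (Polynomial.C (v i) + Polynomial.C (γ i) * Polynomial.X) ^ d i * Polynomial.X ^ d i
      rw [← mul_pow]
      congr 1
      simp [curveSigma]; ring
    rw [this, Finsupp.prod_mul, curveP]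
    congr 1
    rw [Finsupp.prod, Finset.prod_pow_eq_pow_sum, Finsupp.degree]
    rfl
  rw [h1]
  congr 1

lemma curve_coeff_aeval (v γ : Fin n → K) (f : MvPolynomial (Fin n) K) (k : ℕ) :
    (aeval (curveSigma v γ) f).coeff k =
      ∑ d ∈ f.support, coeff d f *
        (if d.degree ≤ k then (curveP v γ d).coeff (k - d.degree) else 0) := by
  conv_lhs => rw [f.as_sum, map_sum]
  rw [Polynomial.finset_sum_coeff]
  refine Finset.sum_congr rfl fun d _ => ?_
  rw [curve_aeval_monomial, Polynomial.coeff_C_mul, Polynomial.coeff_mul_X_pow']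

lemma curve_eval_hc (w : Fin n → K) (m : ℕ) (f : MvPolynomial (Fin n) K) :
    eval w (homogeneousComponent m f) =
      ∑ d ∈ f.support.filter (fun d => d.degree = m),
        coeff d f * d.prod fun i k => w i ^ k := by
  rw [homogeneousComponent_apply, map_sum]
  exact Finset.sum_congr rfl fun d _ => eval_monomial

lemma curve_coeff_zero (v γ : Fin n → K) (f : MvPolynomial (Fin n) K) :
    (aeval (curveSigma v γ) f).coeff 0 = constantCoeff f := by
  rw [curve_coeff_aeval, constantCoeff_eq]
  rcases Finset.decidableMem (0 : Fin n →₀ ℕ) f.support with h | h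
  · rw [Finset.sum_eq_zero, (MvPolynomial.notMem_support_iff).mp h]
    intro d hd
    have : d.degree ≠ 0 := fun h0 =>
      h (((Finsupp.degree_eq_zero_iff d).mp h0) ▸ hd)
    rw [if_neg (by omega), mul_zero]
  · rw [Finset.sum_eq_single_of_mem 0 h]
    · simp [curveP_zero, Polynomial.coeff_one]
    · intro d _ hd0
      have : d.degree ≠ 0 := fun h0 => hd0 ((Finsupp.degree_eq_zero_iff d).mp h0)
      rw [if_neg (by omega), mul_zero]

lemma curve_coeff_one (v γ : Fin n → K) (f : MvPolynomial (Fin n) K) :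
    (aeval (curveSigma v γ) f).coeff 1 = eval v (homogeneousComponent 1 f) := by
  rw [curve_coeff_aeval, curve_eval_hc, Finset.sum_filter]
  refine Finset.sum_congr rfl fun d _ => ?_
  by_cases h1 : d.degree = 1
  · rw [if_pos h1, if_pos (by omega), h1, Nat.sub_self, curveP_coeff_zero]
  · rw [if_neg h1]
    by_cases h0 : d.degree = 0
    · obtain rfl : d = 0 := (Finsupp.degree_eq_zero_iff d).mp h0
      simp [curveP_zero, Polynomial.coeff_one]
    · rw [if_neg (by omega), mul_zero]

lemma curve_coeff_two (v γ : Fin n → K) (f : MvPolynomial (Fin n) K) :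
    (aeval (curveSigma v γ) f).coeff 2 =
      eval γ (homogeneousComponent 1 f) + eval v (homogeneousComponent 2 f) := by
  rw [curve_coeff_aeval, curve_eval_hc, curve_eval_hc, Finset.sum_filter,
    Finset.sum_filter, ← Finset.sum_add_distrib]
  refine Finset.sum_congr rfl fun d _ => ?_
  by_cases h2 : d.degree = 2
  · rw [if_pos (by omega), if_neg (by omega), if_pos h2, h2, Nat.sub_self,
      curveP_coeff_zero, zero_add]
  · by_cases h1 : d.degree = 1
    · obtain ⟨i, rfl⟩ := curveAux_degree_one h1
      rw [if_pos (by omega), if_pos h1, if_neg (by omega), h1, curveP_single,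
        Finsupp.prod_single_index (by rw [pow_zero]), pow_one, add_zero]
      norm_num
    · by_cases h0 : d.degree = 0
      · obtain rfl : d = 0 := (Finsupp.degree_eq_zero_iff d).mp h0
        simp [curveP_zero, Polynomial.coeff_one]
      · rw [if_neg (by omega), if_neg h1, if_neg h2, mul_zero, add_zero]

end CurveAux

/-- Through a tangent-cone direction `v` one can draw a parameterized plane curve
`G(t) = t·v + t²·γ`, with `γ` zero or linearly independent of `v`, meeting the
zero set of `I` with multiplicity at least `3` at the origin: for every `f ∈ I`
the power series (polynomial) `f(t·v + t²·γ)` has vanishing coefficients in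
degrees `0`, `1` and `2`. -/
theorem exists_smooth_plane_curve_multiplicity_ge_three {K : Type*} [Field K]
    {n : ℕ} (I : Ideal (MvPolynomial (Fin n) K))
    (h0 : ∀ f ∈ I, eval (0 : Fin n → K) f = 0)
    (v : Fin n → K)
    (hlin : ∀ f ∈ I, eval v (homogeneousComponent 1 f) = 0)
    (hquad : ∀ f ∈ I, homogeneousComponent 1 f = 0 →
      eval v (homogeneousComponent 2 f) = 0) :
    ∃ γ : Fin n → K, (γ = 0 ∨ LinearIndependent K ![v, γ]) ∧
      ∀ f ∈ I, ∀ k ≤ 2,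
        (aeval (fun i => Polynomial.C (v i) * Polynomial.X +
          Polynomial.C (γ i) * Polynomial.X ^ 2) f).coeff k = 0 := by
  classical
  have haev : ∀ (w : Fin n → K) (p : MvPolynomial (Fin n) K), aeval w p = eval w p := by
    intro w p
    rw [aeval_def, Algebra.algebraMap_self]
    rfl
  -- the main reduction: it suffices to find γ killing the quadratic coefficient
  have main : ∀ γ' : Fin n → K,
      (∀ f ∈ I, eval γ' (homogeneousComponent 1 f)
        + eval v (homogeneousComponent 2 f) = 0) →
      ∀ f ∈ I, ∀ k ≤ 2,
        (aeval (fun i => Polynomial.C (v i) * Polynomial.X +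
          Polynomial.C (γ' i) * Polynomial.X ^ 2) f).coeff k = 0 := by
    intro γ' hγ' f hf k hk
    have hσ : (fun i => Polynomial.C (v i) * Polynomial.X +
        Polynomial.C (γ' i) * Polynomial.X ^ 2) = curveSigma v γ' := rfl
    rw [hσ]
    interval_cases k
    · rw [curve_coeff_zero]
      have := h0 f hf
      rwa [MvPolynomial.eval_zero] at this
    · rw [curve_coeff_one]
      exact hlin f hf
    · rw [curve_coeff_two]
      exact hγ' f hf
  have hc0 : ∀ (m : ℕ) (f : MvPolynomial (Fin n) K), m ≠ 0 →
      eval (0 : Fin n → K) (homogeneousComponent m f) = 0 := by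
    intro m f hm
    rw [MvPolynomial.eval_zero]
    simp [constantCoeff_eq, coeff_homogeneousComponent, map_zero, Ne.symm hm]
  -- linear-algebra construction of γ₀
  let S : Submodule K (MvPolynomial (Fin n) K) := Submodule.restrictScalars K I
  let Φ : S →ₗ[K] MvPolynomial (Fin n) K := (homogeneousComponent 1).comp S.subtype
  let B : MvPolynomial (Fin n) K →ₗ[K] K :=
    (aeval v : MvPolynomial (Fin n) K →ₐ[K] K).toLinearMap.comp (homogeneousComponent 2)
  let Ψ : S →ₗ[K] K := -(B.comp S.subtype)
  have hker : LinearMap.ker Φ ≤ LinearMap.ker Ψ := by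
    rintro ⟨f, hf⟩ hmem
    have h1 : homogeneousComponent 1 f = 0 := hmem
    have h2 : eval v (homogeneousComponent 2 f) = 0 := hquad f hf h1
    simp only [LinearMap.mem_ker, Ψ, LinearMap.neg_apply, LinearMap.comp_apply,
      Submodule.subtype_apply, B, AlgHom.toLinearMap_apply, neg_eq_zero]
    rw [haev]
    exact h2
  let g0 := (LinearMap.ker Φ).liftQ Ψ hker
  let g : LinearMap.range Φ →ₗ[K] K := g0.comp Φ.quotKerEquivRange.symm.toLinearMap
  obtain ⟨G, hG⟩ := g.exists_extend
  have key : ∀ f ∈ I, G (homogeneousComponent 1 f)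
      = -(eval v (homogeneousComponent 2 f)) := by
    intro f hf
    have hmem : homogeneousComponent 1 f ∈ LinearMap.range Φ := ⟨⟨f, hf⟩, rfl⟩
    have h1 : G (homogeneousComponent 1 f) = g ⟨homogeneousComponent 1 f, hmem⟩ :=
      DFunLike.congr_fun hG ⟨homogeneousComponent 1 f, hmem⟩
    have h2 : (⟨homogeneousComponent 1 f, hmem⟩ : LinearMap.range Φ)
        = ⟨Φ ⟨f, hf⟩, LinearMap.mem_range_self Φ ⟨f, hf⟩⟩ := rfl
    rw [h1, h2]
    show g0 (Φ.quotKerEquivRange.symm ⟨Φ ⟨f, hf⟩, _⟩) = _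
    rw [LinearMap.quotKerEquivRange_symm_apply_image]
    show g0 (Submodule.Quotient.mk ⟨f, hf⟩) = _
    rw [Submodule.liftQ_apply]
    show -(B f) = _
    simp only [B, LinearMap.comp_apply, AlgHom.toLinearMap_apply]
    rw [haev]
  let γ0 : Fin n → K := fun i => G (MvPolynomial.X i)
  have hrep : ∀ f : MvPolynomial (Fin n) K,
      eval γ0 (homogeneousComponent 1 f) = G (homogeneousComponent 1 f) := by
    intro f
    rw [homogeneousComponent_apply, map_sum, map_sum]
    refine Finset.sum_congr rfl fun d hd => ?_
    obtain ⟨i, rfl⟩ := curveAux_degree_one (Finset.mem_filter.mp hd).2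
    have hmono : (monomial (Finsupp.single i 1)) (coeff (Finsupp.single i 1) f)
        = coeff (Finsupp.single i 1) f • (MvPolynomial.X i : MvPolynomial (Fin n) K) := by
      rw [MvPolynomial.smul_eq_C_mul, MvPolynomial.X, C_mul_monomial, mul_one]
    rw [eval_monomial, Finsupp.prod_single_index (by rw [pow_zero]), pow_one, hmono,
      map_smul, smul_eq_mul]
  have hsmul : ∀ (c : K) (f : MvPolynomial (Fin n) K),
      eval (c • v) (homogeneousComponent 1 f)
        = c * eval v (homogeneousComponent 1 f) := by
    intro c f
    rw [homogeneousComponent_apply, map_sum, map_sum, Finset.mul_sum]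
    refine Finset.sum_congr rfl fun d hd => ?_
    obtain ⟨i, rfl⟩ := curveAux_degree_one (Finset.mem_filter.mp hd).2
    rw [eval_monomial, eval_monomial, Finsupp.prod_single_index (by rw [pow_zero]),
      Finsupp.prod_single_index (by rw [pow_zero]), pow_one, pow_one]
    simp only [Pi.smul_apply, smul_eq_mul]
    ring
  by_cases hdeg : v = 0 ∨ ∃ c : K, γ0 = c • v
  · -- degenerate case: take γ = 0
    have hq0 : ∀ f ∈ I, eval v (homogeneousComponent 2 f) = 0 := by
      rcases hdeg with rfl | ⟨c, hc⟩
      · intro f hf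
        exact hc0 2 f (by norm_num)
      · intro f hf
        have h1 := key f hf
        rw [← hrep f, hc, hsmul, hlin f hf, mul_zero] at h1
        exact neg_eq_zero.mp h1.symm
    refine ⟨0, Or.inl rfl, main 0 ?_⟩
    intro f hf
    rw [hc0 1 f one_ne_zero, hq0 f hf, add_zero]
  · push_neg at hdeg
    obtain ⟨hv, hind⟩ := hdeg
    refine ⟨γ0, Or.inr ?_, main γ0 ?_⟩
    · apply linearIndependent_fin2.mpr
      constructor
      · simp only [Matrix.cons_val_one, Matrix.head_cons]
        intro h
        exact hind 0 (by rw [zero_smul]; exact h)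
      · intro a ha
        simp only [Matrix.cons_val_one, Matrix.head_cons, Matrix.cons_val_zero] at ha
        rcases eq_or_ne a 0 with rfl | ha0
        · rw [zero_smul] at ha
          exact hv ha.symm
        · exact hind a⁻¹ (by rw [← ha, smul_smul, inv_mul_cancel₀ ha0, one_smul])
    · intro f hf
      rw [hrep f, key f hf, neg_add_cancel]
end

section
/- Let $N$ be a commutative associative algebra with $N^3 = 0$ over a field $K$ with $\mathrm{char}\, K \neq 2$, and let $f \in L(N/N^2, K)$ be a linear functional, viewed as $f: N \to K$ vanishing on $N^2$. Define $x \circ y = f(y)x + f(x)y$. Then $\circ$ is symmetric bilinear and satisfies the cocycle condition $x(y\circ z) - (xy)\circ z + x\circ(yz) - (x\circ y)z = 0$ for all $x,y,z \in N$. -/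
/-- For a linear functional `f` on `N` vanishing on `N²`, the map
`x ∘ y = f(y)x + f(x)y` is a symmetric bilinear 2-cocycle:
`x(y∘z) - (xy)∘z + x∘(yz) - (x∘y)z = 0`. -/
theorem functional_cocycle {K N : Type*} [Field K]
    [NonUnitalCommRing N] [Module K N] [SMulCommClass K N N] [IsScalarTower K N N]
    (h2K : (2 : K) ≠ 0)
    (hN3 : ∀ x y z : N, x * y * z = 0)
    (f : N →ₗ[K] K)
    (hf : ∀ x y : N, f (x * y) = 0)
    (circ : N → N → N)
    (hcirc : ∀ x y : N, circ x y = f y • x + f x • y) :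
    (∀ x y : N, circ x y = circ y x) ∧
    (∀ x x' y : N, circ (x + x') y = circ x y + circ x' y) ∧
    (∀ (a : K) (x y : N), circ (a • x) y = a • circ x y) ∧
    (∀ x y z : N,
      x * circ y z - circ (x * y) z + circ x (y * z) - circ x y * z = 0) := by
  refine ⟨fun x y => by rw [hcirc, hcirc]; abel,
    fun x x' y => by simp [hcirc, add_smul]; abel,
    fun a x y => by simp [hcirc, smul_add, smul_smul, mul_comm], ?_⟩
  intro x y z
  simp only [hcirc, hf, zero_smul, zero_add, add_zero, mul_add, add_mul,
    mul_smul_comm, smul_mul_assoc]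
  rw [mul_comm x z]
  abel
end
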